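/- Let π(dx) ∝ e^{−U(x)} dx be a probability measure on ℝ^d whose potential U is L-Lipschitz continuous. Then for all k ∈ {1,…,d} and all x, y ∈ ℝ^d, the Kullback–Leibler divergence between the one-dimensional conditional distributions satisfies KL(π(·|x_{−k}) ‖ π(·|y_{−k})) ≤ 2L·|x_{−k} − y_{−k}|. -/

import Mathlib

open MeasureTheory ProbabilityTheory Set
open scoped ENNReal NNReal

noncomputable section

abbrev Euc (d : ℕ) := EuclideanSpace ℝ (Fin d)

/-- Total variation distance between two measures. -/
def tvDist {X : Type*} [MeasurableSpace X] (μ ν : Measure X) : ℝ :=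
  ⨆ s : {s : Set X // MeasurableSet s}, |(μ s.1).toReal - (ν s.1).toReal|

/-- Euclidean distance between two sets. -/
def setDist' {X : Type*} [Dist X] (A B : Set X) : ℝ :=
  sInf {r | ∃ x ∈ A, ∃ y ∈ B, r = dist x y}

/-- Update the `k`-th coordinate of `x` to `t`. -/
def updCoord {d : ℕ} (k : Fin d) (t : ℝ) (x : Euc d) : Euc d :=
  WithLp.toLp 2 (Function.update x k t)

/-- Euclidean distance between `x` and `y` after removing coordinate `k`. -/
def distMinus {d : ℕ} (k : Fin d) (x y : Euc d) : ℝ :=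
  Real.sqrt (∑ j ∈ Finset.univ.erase k, (x j - y j) ^ 2)

/-- The Gibbs kernel updating coordinate `k` from conditionals `cond`. -/
def gibbsStep {d : ℕ} (cond : Fin d → Euc d → Measure ℝ) (k : Fin d) (x : Euc d) :
    Measure (Euc d) :=
  (cond k x).map (fun t => updCoord k t x)

/-- Sequentially update coordinates `0, 1, …, n-1`. -/
def sweep {d : ℕ} (cond : Fin d → Euc d → Measure ℝ) : ℕ → Euc d → Measure (Euc d)
  | 0, x => Measure.dirac x
  | (n + 1), x => (sweep cond n x).bind
      (fun u => if h : n < d then gibbsStep cond ⟨n, h⟩ u else Measure.dirac u)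

/-- The systematic-scan Gibbs kernel. -/
def PSS {d : ℕ} (cond : Fin d → Euc d → Measure ℝ) (x : Euc d) : Measure (Euc d) :=
  sweep cond d x

/-- The random-scan Gibbs kernel. -/
def PRS {d : ℕ} (cond : Fin d → Euc d → Measure ℝ) (x : Euc d) : Measure (Euc d) :=
  (d : ℝ≥0∞)⁻¹ • ∑ k : Fin d, gibbsStep cond k x

/-- `N`-fold iterate of a Markov kernel. -/
def iterK {X : Type*} [MeasurableSpace X] (P : X → Measure X) : ℕ → X → Measure X
  | 0, x => Measure.dirac x
  | (n + 1), x => (iterK P n x).bind P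

/-- Distribution after `k` steps of `P` started from `μ`. -/
def iterM {X : Type*} [MeasurableSpace X] (P : X → Measure X) (k : ℕ) (μ : Measure X) :
    Measure X :=
  μ.bind (iterK P k)

/-- Conductance of a `π`-invariant Markov kernel `P`. -/
def conductance {X : Type*} [MeasurableSpace X] (π : Measure X) (P : X → Measure X) : ℝ :=
  sInf {r | ∃ S : Set X, MeasurableSet S ∧ 0 < π S ∧ π S ≤ 1 / 2 ∧
    r = (∫ x in S, (P x Sᶜ).toReal ∂π) / (π S).toReal}

/-- Spectral gap of a `π`-reversible Markov kernel `P`. -/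
def spectralGap {X : Type*} [MeasurableSpace X] (π : Measure X) (P : X → Measure X) : ℝ :=
  sInf {r | ∃ f : X → ℝ, MemLp f 2 π ∧ (∫ x, f x ∂π) = 0 ∧ (∫ x, f x ^ 2 ∂π) ≠ 0 ∧
    r = (∫ x, f x * (f x - ∫ y, f y ∂(P x)) ∂π) / ∫ x, f x ^ 2 ∂π}

/-- ζ-mixing time of `P` started from `μ`, targeting `π`. -/
def mixingTime {X : Type*} [MeasurableSpace X] (π μ : Measure X) (P : X → Measure X)
    (ζ : ℝ) : ℕ∞ :=
  ⨅ (k : ℕ) (_ : tvDist (iterM P k μ) π ≤ ζ), (k : ℕ∞)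

/-- `π` satisfies the `L^q`-Poincaré inequality with constant `C`. -/
def PoincareIneq {d : ℕ} (π : Measure (Euc d)) (q C : ℝ) : Prop :=
  ∀ f : Euc d → ℝ, LocallyLipschitz f →
    ∫ x, |f x - ∫ y, f y ∂π| ^ q ∂π ≤ C⁻¹ * ∫ x, ‖fderiv ℝ f x‖ ^ q ∂π

/-- `π` satisfies the `L^q`-log-Sobolev inequality with constant `C`. -/
def LogSobolevIneq {d : ℕ} (π : Measure (Euc d)) (q C : ℝ) : Prop :=
  ∀ f : Euc d → ℝ, LocallyLipschitz f →
    (∫ x, |f x| ^ q * Real.log (|f x| ^ q) ∂π)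
      - (∫ x, |f x| ^ q ∂π) * Real.log (∫ x, |f x| ^ q ∂π)
    ≤ C⁻¹ * ∫ x, ‖fderiv ℝ f x‖ ^ q ∂π

/-- The conditional distributions of `π` (given by `cond`) are `(M, β)`-TV continuous. -/
def TVContinuousConditionals {d : ℕ} (cond : Fin d → Euc d → Measure ℝ) (M β : ℝ) : Prop :=
  ∀ k : Fin d, ∀ x y : Euc d, tvDist (cond k x) (cond k y) ≤ M * distMinus k x y ^ β

/-- `cond` is a valid family of single-coordinate conditional distributions for `π`:
each `cond k x` is a probability measure, depends only on `x₋ₖ`, is measurable in `x`,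
and disintegrates `π`. -/
def IsConditional {d : ℕ} (π : Measure (Euc d)) (cond : Fin d → Euc d → Measure ℝ) : Prop :=
  (∀ k x, IsProbabilityMeasure (cond k x)) ∧
  (∀ k, Measurable (cond k)) ∧
  (∀ k : Fin d, ∀ x y : Euc d, (∀ j, j ≠ k → x j = y j) → cond k x = cond k y) ∧
  (∀ k : Fin d, π.bind (gibbsStep cond k) = π)

/-- Normalized Gibbs measure with potential `U`. -/
def gibbsTarget {d : ℕ} (U : Euc d → ℝ) : Measure (Euc d) :=
  (∫⁻ x, ENNReal.ofReal (Real.exp (-U x)))⁻¹ •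
    (volume.withDensity fun x => ENNReal.ofReal (Real.exp (-U x)))

/-- Explicit one-dimensional conditional distribution of the Gibbs measure with
potential `U`: the `k`-th coordinate given the others (taken from `x`). -/
def gibbsCond {d : ℕ} (U : Euc d → ℝ) (k : Fin d) (x : Euc d) : Measure ℝ :=
  (∫⁻ t, ENNReal.ofReal (Real.exp (-U (updCoord k t x))))⁻¹ •
    (volume.withDensity fun t => ENNReal.ofReal (Real.exp (-U (updCoord k t x))))


lemma updCoord_isometry {d : ℕ} (k : Fin d) (x : Euc d) :
    Isometry (fun t : ℝ => updCoord k t x) := by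
  apply Isometry.of_dist_eq
  intro s t
  rw [EuclideanSpace.dist_eq]
  have : ∀ i : Fin d, dist (updCoord k s x i) (updCoord k t x i) ^ 2
      = if i = k then dist s t ^ 2 else 0 := by
    intro i
    by_cases h : i = k
    · subst h; simp [updCoord]
    · simp [updCoord, Function.update_of_ne h, h]
  simp_rw [this]
  rw [Finset.sum_ite_eq' Finset.univ k (fun _ => dist s t ^ 2)]
  simp [Real.sqrt_sq dist_nonneg]

lemma norm_updCoord_sub_updCoord {d : ℕ} (k : Fin d) (t : ℝ) (x y : Euc d) :
    ‖updCoord k t x - updCoord k t y‖ = distMinus k x y := by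
  rw [EuclideanSpace.norm_eq, distMinus]
  congr 1
  rw [← Finset.sum_erase_add _ _ (Finset.mem_univ k)]
  have hk : ‖(updCoord k t x - updCoord k t y) k‖ ^ 2 = 0 := by
    simp [updCoord, PiLp.sub_apply]
  rw [hk, add_zero]
  apply Finset.sum_congr rfl
  intro j hj
  have hjk : j ≠ k := Finset.ne_of_mem_erase hj
  simp [updCoord, PiLp.sub_apply, Function.update_of_ne hjk, Real.norm_eq_abs, sq_abs]

lemma lip_continuous {d : ℕ} (L : ℝ) (hL : 0 ≤ L) (U : Euc d → ℝ)
    (hLip : ∀ x y : Euc d, |U x - U y| ≤ L * ‖x - y‖) : Continuous U := by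
  have : LipschitzWith L.toNNReal U := by
    apply LipschitzWith.of_dist_le_mul
    intro a b
    rw [Real.dist_eq, dist_eq_norm, Real.coe_toNNReal L hL]
    exact hLip a b

  exact this.continuous

lemma slice_lt_top {d : ℕ} (L : ℝ) (hL : 0 ≤ L) (U : Euc d → ℝ)
    (hLip : ∀ x y : Euc d, |U x - U y| ≤ L * ‖x - y‖)
    (hInt : Integrable fun x : Euc d => Real.exp (-U x)) (k : Fin d) (x : Euc d) :
    (∫⁻ t, ENNReal.ofReal (Real.exp (-U (updCoord k t x)))) < ∞ := by
  have hUc : Continuous U := lip_continuous L hL U hLip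
  set z : ℝ → Euc d := fun t => updCoord k t x with hz
  have hzc : Continuous z := (updCoord_isometry k x).continuous
  set g : Euc d → ℝ≥0∞ := fun w => ENNReal.ofReal (Real.exp (-U w)) with hg
  have hgm : Measurable g :=
    ENNReal.measurable_ofReal.comp (Real.continuous_exp.comp hUc.neg).measurable
  set B := volume (Metric.ball (0 : Euc d) 1) with hB
  have hB0 : B ≠ 0 := (Metric.measure_ball_pos _ _ one_pos).ne'
  have hBtop : B ≠ ∞ := measure_ball_lt_top.ne
  -- step 1 : pointwise comparison with ball average
  have step1 : ∀ t, g (z t) * B ≤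
      ENNReal.ofReal (Real.exp L) * ∫⁻ w in Metric.ball (z t) 1, g w := by
    intro t
    have hpt : ∀ w ∈ Metric.ball (z t) 1, g (z t) ≤ ENNReal.ofReal (Real.exp L) * g w := by
      intro w hw
      rw [hg, ← ENNReal.ofReal_mul (Real.exp_nonneg _), ← Real.exp_add]
      apply ENNReal.ofReal_le_ofReal
      apply Real.exp_le_exp.mpr
      have h1 := (abs_le.mp (hLip w (z t))).2
      rw [norm_sub_rev] at h1
      have h2 : ‖z t - w‖ ≤ 1 := by
        rw [← dist_eq_norm, dist_comm]
        exact le_of_lt (Metric.mem_ball.mp hw)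
      nlinarith
    calc g (z t) * B = ∫⁻ _ in Metric.ball (z t) 1, g (z t) := by
          rw [setLIntegral_const, Measure.addHaar_ball_center]
      _ ≤ ∫⁻ w in Metric.ball (z t) 1, ENNReal.ofReal (Real.exp L) * g w :=
          setLIntegral_mono (hgm.const_mul _) hpt
      _ = ENNReal.ofReal (Real.exp L) * ∫⁻ w in Metric.ball (z t) 1, g w :=
          lintegral_const_mul _ hgm
  set C := ENNReal.ofReal (Real.exp L) / B with hC
  have hCtop : C ≠ ∞ := (ENNReal.div_lt_top ENNReal.ofReal_ne_top hB0).ne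
  have step2 : ∀ t, g (z t) ≤ C * ∫⁻ w in Metric.ball (z t) 1, g w := by
    intro t
    rw [hC, div_eq_mul_inv, mul_right_comm, ← div_eq_mul_inv]
    exact (ENNReal.le_div_iff_mul_le (Or.inl hB0) (Or.inl hBtop)).2 (step1 t)
  set S : Set (ℝ × Euc d) := {p | dist p.2 (z p.1) < 1} with hS
  have hSopen : IsOpen S :=
    isOpen_lt (continuous_snd.dist (hzc.comp continuous_fst)) continuous_const
  have hHm : Measurable fun p : ℝ × Euc d => S.indicator (fun q => g q.2) p :=
    (hgm.comp measurable_snd).indicator hSopen.measurableSet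
  have hsec_meas : ∀ w : Euc d, MeasurableSet {t : ℝ | dist w (z t) < 1} := fun w =>
    (isOpen_lt (continuous_const.dist hzc) continuous_const).measurableSet
  have hswap : (∫⁻ t, ∫⁻ w in Metric.ball (z t) 1, g w)
      = ∫⁻ w, g w * volume {t : ℝ | dist w (z t) < 1} := by
    have e1 : ∀ t, (∫⁻ w in Metric.ball (z t) 1, g w)
        = ∫⁻ w, S.indicator (fun q => g q.2) (t, w) := by
      intro t
      rw [← lintegral_indicator measurableSet_ball]
      rfl
    simp_rw [e1]
    rw [lintegral_lintegral_swap hHm.aemeasurable]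
    congr 1; funext w
    have e2 : ∀ t, S.indicator (fun q : ℝ × Euc d => g q.2) (t, w)
        = {t : ℝ | dist w (z t) < 1}.indicator (fun _ => g w) t := by
      intro t; simp [Set.indicator_apply, hS]
    simp_rw [e2]
    exact lintegral_indicator_const (hsec_meas w) _
  have hsecle : ∀ w : Euc d, volume {t : ℝ | dist w (z t) < 1} ≤ 2 := by
    intro w
    have hsub : {t : ℝ | dist w (z t) < 1} ⊆ Metric.ball (w k) 1 := by
      intro t ht
      simp only [Set.mem_setOf_eq] at ht
      have hzk : z t k = t := by simp [hz, updCoord]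
      have hle : dist (w k) (z t k) ≤ dist w (z t) := by
        rw [EuclideanSpace.dist_eq,
          show dist (w k) (z t k) = Real.sqrt (dist (w k) (z t k) ^ 2) from
            (Real.sqrt_sq dist_nonneg).symm]
        exact Real.sqrt_le_sqrt
          (Finset.single_le_sum (f := fun i => dist (w i) (z t i) ^ 2)
            (fun i _ => sq_nonneg _) (Finset.mem_univ k))
      rw [hzk] at hle
      rw [Metric.mem_ball]
      calc dist t (w k) = dist (w k) t := dist_comm _ _
        _ ≤ dist w (z t) := hle
        _ < 1 := ht
    calc volume {t : ℝ | dist w (z t) < 1} ≤ volume (Metric.ball (w k) 1) :=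
          measure_mono hsub
      _ = ENNReal.ofReal (2 * 1) := Real.volume_ball _ _
      _ ≤ 2 := by norm_num
  have hfin : (∫⁻ w, g w * volume {t : ℝ | dist w (z t) < 1}) ≤ (∫⁻ w, g w) * 2 :=
    calc (∫⁻ w, g w * volume {t : ℝ | dist w (z t) < 1}) ≤ ∫⁻ w, g w * 2 :=
          lintegral_mono fun w => mul_le_mul_right (hsecle w) _
      _ = (∫⁻ w, g w) * 2 := lintegral_mul_const _ hgm
  have hZU : (∫⁻ w, g w) < ∞ := hInt.lintegral_lt_top
  calc (∫⁻ t, ENNReal.ofReal (Real.exp (-U (updCoord k t x))))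
      = ∫⁻ t, g (z t) := rfl
    _ ≤ ∫⁻ t, C * ∫⁻ w in Metric.ball (z t) 1, g w := lintegral_mono step2
    _ = C * ∫⁻ t, ∫⁻ w in Metric.ball (z t) 1, g w := lintegral_const_mul' _ _ hCtop
    _ = C * ∫⁻ w, g w * volume {t : ℝ | dist w (z t) < 1} := by rw [hswap]
    _ ≤ C * ((∫⁻ w, g w) * 2) := mul_le_mul_right hfin _
    _ < ∞ := ENNReal.mul_lt_top hCtop.lt_top
        (ENNReal.mul_lt_top hZU (by norm_num))

lemma distMinus_comm {d : ℕ} (k : Fin d) (x y : Euc d) :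
    distMinus k y x = distMinus k x y := by
  unfold distMinus
  congr 1
  apply Finset.sum_congr rfl
  intro j _
  ring

/-- **KL bound between conditionals of log-Lipschitz targets.** If the potential `U` is
`L`-Lipschitz and `e^{−U}` is integrable, then for all `k`, `x`, `y`,
`KL(π(·|x₋ₖ) ‖ π(·|y₋ₖ)) ≤ 2L·|x₋ₖ − y₋ₖ|`, where `KL(μ‖ν) = ∫ log(dμ/dν) dμ`. -/
theorem conditionals_kl_of_log_lipschitz {d : ℕ} (L : ℝ) (hL : 0 < L) (U : Euc d → ℝ)
    (hLip : ∀ x y : Euc d, |U x - U y| ≤ L * ‖x - y‖)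
    (hInt : Integrable fun x : Euc d => Real.exp (-U x)) :
    ∀ (k : Fin d) (x y : Euc d),
      ∫ t, Real.log (((gibbsCond U k x).rnDeriv (gibbsCond U k y) t).toReal)
          ∂(gibbsCond U k x)
        ≤ 2 * L * distMinus k x y := by
  intro k x y
  have hD0 : 0 ≤ distMinus k x y := Real.sqrt_nonneg _
  set D := distMinus k x y with hD
  have hUc : Continuous U := lip_continuous L hL.le U hLip
  set F : Euc d → ℝ → ℝ≥0∞ := fun v t => ENNReal.ofReal (Real.exp (-U (updCoord k t v)))
    with hF
  have hFmeas : ∀ v, Measurable (F v) := fun v =>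
    ENNReal.measurable_ofReal.comp
      (Real.continuous_exp.comp
        ((hUc.comp (updCoord_isometry k v).continuous).neg)).measurable
  set Z : Euc d → ℝ≥0∞ := fun v => ∫⁻ t, F v t with hZ
  have hZtop : ∀ v, Z v ≠ ∞ := fun v => (slice_lt_top L hL.le U hLip hInt k v).ne
  have hZ0 : ∀ v, Z v ≠ 0 := by
    intro v
    have hpos : 0 < ∫⁻ t, F v t := by
      rw [lintegral_pos_iff_support (hFmeas v)]
      have hsupp : Function.support (F v) = Set.univ := by
        ext t
        simp [hF, Function.mem_support, (ENNReal.ofReal_pos.2 (Real.exp_pos _)).ne']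
      rw [hsupp, Real.volume_univ]
      exact ENNReal.zero_lt_top
    exact hpos.ne'
  have hgc : ∀ v, gibbsCond U k v = volume.withDensity (fun t => (Z v)⁻¹ * F v t) := by
    intro v
    rw [show (fun t => (Z v)⁻¹ * F v t) = (Z v)⁻¹ • F v from rfl,
      withDensity_smul _ (hFmeas v)]
    rfl
  have hprob : ∀ v, IsProbabilityMeasure (gibbsCond U k v) := by
    intro v
    constructor
    rw [hgc v, withDensity_apply _ MeasurableSet.univ, Measure.restrict_univ,
      lintegral_const_mul _ (hFmeas v)]
    exact ENNReal.inv_mul_cancel (hZ0 v) (hZtop v)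
  haveI hpx : IsProbabilityMeasure (gibbsCond U k x) := hprob x
  haveI hpy : IsProbabilityMeasure (gibbsCond U k y) := hprob y
  set h : ℝ → ℝ≥0∞ := fun t => ((Z x)⁻¹ * F x t) / ((Z y)⁻¹ * F y t) with hh
  have hhm : Measurable h := ((hFmeas x).const_mul _).div ((hFmeas y).const_mul _)
  have hkey : (gibbsCond U k y).withDensity h = gibbsCond U k x := by
    rw [hgc x, hgc y, ← withDensity_mul _ ((hFmeas y).const_mul _) hhm]
    congr 1
    funext t
    exact ENNReal.mul_div_cancel
      (mul_ne_zero (ENNReal.inv_ne_zero.2 (hZtop y))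
        (ENNReal.ofReal_pos.2 (Real.exp_pos _)).ne')
      (ENNReal.mul_ne_top (ENNReal.inv_ne_top.2 (hZ0 y)) ENNReal.ofReal_ne_top)
  have hrn : (gibbsCond U k x).rnDeriv (gibbsCond U k y) =ᵐ[gibbsCond U k y] h := by
    rw [← hkey]
    exact Measure.rnDeriv_withDensity (gibbsCond U k y) hhm
  have hac : gibbsCond U k x ≪ gibbsCond U k y :=
    by rw [← hkey]; exact withDensity_absolutelyContinuous (gibbsCond U k y) h
  have hrnx : (gibbsCond U k x).rnDeriv (gibbsCond U k y) =ᵐ[gibbsCond U k x] h :=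
    hrn.filter_mono hac.ae_le
  -- comparison between the potentials on updated points
  have hUcomp : ∀ (t : ℝ) (v w : Euc d), distMinus k v w = D →
      U (updCoord k t v) - U (updCoord k t w) ≤ L * D := by
    intro t v w hvw
    have := (abs_le.mp (hLip (updCoord k t v) (updCoord k t w))).2
    rwa [norm_updCoord_sub_updCoord, hvw] at this
  have hzx : 0 < (Z x).toReal := ENNReal.toReal_pos (hZ0 x) (hZtop x)
  have hzy : 0 < (Z y).toReal := ENNReal.toReal_pos (hZ0 y) (hZtop y)
  -- bound on log of normalizing constants
  have hzyx : Real.log (Z y).toReal - Real.log (Z x).toReal ≤ L * D := by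
    have hFle : ∀ t, F y t ≤ ENNReal.ofReal (Real.exp (L * D)) * F x t := by
      intro t
      rw [hF]
      simp only
      rw [← ENNReal.ofReal_mul (Real.exp_nonneg _), ← Real.exp_add]
      apply ENNReal.ofReal_le_ofReal
      apply Real.exp_le_exp.mpr
      have := hUcomp t x y (by rw [hD])
      linarith
    have hZle : Z y ≤ ENNReal.ofReal (Real.exp (L * D)) * Z x := by
      calc Z y ≤ ∫⁻ t, ENNReal.ofReal (Real.exp (L * D)) * F x t := lintegral_mono hFle
        _ = ENNReal.ofReal (Real.exp (L * D)) * Z x := lintegral_const_mul _ (hFmeas x)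
    have hle : (Z y).toReal ≤ Real.exp (L * D) * (Z x).toReal := by
      have h2 := ENNReal.toReal_mono
        (ENNReal.mul_ne_top ENNReal.ofReal_ne_top (hZtop x)) hZle
      rwa [ENNReal.toReal_mul, ENNReal.toReal_ofReal (Real.exp_nonneg _)] at h2
    have hlog : Real.log (Z y).toReal ≤ Real.log (Real.exp (L * D) * (Z x).toReal) :=
      Real.log_le_log hzy hle
    rw [Real.log_mul (Real.exp_ne_zero _) hzx.ne', Real.log_exp] at hlog
    linarith
  -- pointwise bound on the log density ratio
  have hbd : ∀ t, Real.log ((h t).toReal) ≤ 2 * L * D := by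
    intro t
    have htr : (h t).toReal =
        ((Z x).toReal⁻¹ * Real.exp (-U (updCoord k t x))) /
        ((Z y).toReal⁻¹ * Real.exp (-U (updCoord k t y))) := by
      rw [hh]
      simp only [hF]
      rw [ENNReal.toReal_div, ENNReal.toReal_mul, ENNReal.toReal_mul, ENNReal.toReal_inv,
        ENNReal.toReal_inv, ENNReal.toReal_ofReal (Real.exp_nonneg _),
        ENNReal.toReal_ofReal (Real.exp_nonneg _)]
    rw [htr, Real.log_div (by positivity) (by positivity),
      Real.log_mul (by positivity) (Real.exp_ne_zero _),
      Real.log_mul (by positivity) (Real.exp_ne_zero _),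
      Real.log_inv, Real.log_inv, Real.log_exp, Real.log_exp]
    have h2 : U (updCoord k t y) - U (updCoord k t x) ≤ L * D :=
      hUcomp t y x (by rw [distMinus_comm, hD])
    linarith
  -- conclude
  have hcong : ∫ t, Real.log (((gibbsCond U k x).rnDeriv (gibbsCond U k y) t).toReal)
      ∂(gibbsCond U k x) = ∫ t, Real.log ((h t).toReal) ∂(gibbsCond U k x) := by
    apply integral_congr_ae
    filter_upwards [hrnx] with t ht
    rw [ht]
  rw [hcong]
  by_cases hint : Integrable (fun t => Real.log ((h t).toReal)) (gibbsCond U k x)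
  · calc ∫ t, Real.log ((h t).toReal) ∂(gibbsCond U k x)
        ≤ ∫ _, 2 * L * D ∂(gibbsCond U k x) :=
          integral_mono hint (integrable_const _) hbd
      _ = 2 * L * D := by simp
  · rw [integral_undef hint]
    exact mul_nonneg (mul_nonneg (by norm_num) hL.le) hD0
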